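/- arXiv:0808.2877 — 3 statements merged into one kernel-verified Lean document; each statement's English description precedes it below -/
import Mathlib

section
/- Let μ be a discrete Gibbs measure μ(k) = (1/Z) e^{V(k)} ω^k / k! on {0,...,N}, f : {0,...,N} → ℝ bounded, and define g(0) = 0 and g(j+1) = (j!/ω^{j+1}) e^{-V(j+1)} Σ_{k=0}^{j} e^{V(k)} (ω^k/k!)(f(k) - μ(f)) for 0 ≤ j ≤ N-1. Then g solves the Stein equation g(k+1) ω e^{V(k+1)-V(k)} - k g(k) = f(k) - μ(f) for all k ≤ N (with the convention g(N+1) = 0 when N is finite). -/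
/-- The forward-recursion formula (2.5) solves the Stein equation (2.4) for a
discrete Gibbs measure μ(k) = e^{V(k)} ω^k / (k! Z) on {0,…,N}, with the convention
g(N+1) = 0. -/
theorem stein_equation_solution (N : ℕ) (V : ℕ → ℝ) (ω Z : ℝ) (hω : 0 < ω)
    (hZ : Z = ∑ k ∈ Finset.range (N + 1), Real.exp (V k) * ω ^ k / (Nat.factorial k))
    (f : ℕ → ℝ) (μf : ℝ)
    (hμf : μf = ∑ k ∈ Finset.range (N + 1),
      f k * (Real.exp (V k) * ω ^ k / (Nat.factorial k) / Z))
    (g : ℕ → ℝ) (hg0 : g 0 = 0) (hgN : g (N + 1) = 0)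
    (hg : ∀ j : ℕ, j < N → g (j + 1) =
      (Nat.factorial j : ℝ) / ω ^ (j + 1) * Real.exp (-(V (j + 1))) *
        ∑ k ∈ Finset.range (j + 1),
          Real.exp (V k) * ω ^ k / (Nat.factorial k) * (f k - μf)) :
    ∀ k : ℕ, k ≤ N →
      g (k + 1) * ω * Real.exp (V (k + 1) - V k) - k * g k = f k - μf := by
  have hωne : ω ≠ 0 := ne_of_gt hω
  have hZpos : 0 < Z := by
    rw [hZ]
    apply Finset.sum_pos
    · intro k _
      have : (0:ℝ) < Nat.factorial k := by positivity
      positivity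
    · exact Finset.nonempty_range_add_one
  have hZne : Z ≠ 0 := ne_of_gt hZpos
  have hsum0 : ∑ k ∈ Finset.range (N+1),
      Real.exp (V k) * ω ^ k / (Nat.factorial k) * (f k - μf) = 0 := by
    have h1 : ∑ k ∈ Finset.range (N+1),
        Real.exp (V k) * ω ^ k / (Nat.factorial k) * (f k - μf)
        = (∑ k ∈ Finset.range (N+1),
            f k * (Real.exp (V k) * ω ^ k / (Nat.factorial k))) - μf * Z := by
      rw [hZ, Finset.mul_sum, ← Finset.sum_sub_distrib]
      exact Finset.sum_congr rfl fun k _ => by ring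
    have h2 : ∑ k ∈ Finset.range (N+1),
        f k * (Real.exp (V k) * ω ^ k / (Nat.factorial k)) = μf * Z := by
      rw [hμf, Finset.sum_mul]
      exact Finset.sum_congr rfl fun k _ => by field_simp
    rw [h1, h2]; ring
  intro k hk
  have hfk : (0:ℝ) < Nat.factorial k := by positivity
  rcases eq_or_lt_of_le hk with rfl | hkN
  · -- boundary case k = N
    rw [hgN]
    rcases Nat.eq_zero_or_pos k with rfl | hN
    · have h0 : f 0 - μf = 0 := by
        have h1 := hsum0
        simp only [zero_add, Finset.sum_range_one, pow_zero, Nat.factorial_zero,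
          Nat.cast_one, div_one, mul_one] at h1
        have := Real.exp_pos (V 0)
        rcases mul_eq_zero.mp h1 with h | h
        · exact absurd h (ne_of_gt this)
        · exact h
      simp [hg0, h0]
    · obtain ⟨m, rfl⟩ : ∃ m, k = m + 1 := ⟨k - 1, (Nat.succ_pred_eq_of_pos hN).symm⟩
      rw [hg (m) (Nat.lt_succ_self m)]
      rw [Finset.sum_range_succ] at hsum0
      have hS : ∑ i ∈ Finset.range (m+1),
          Real.exp (V i) * ω ^ i / (Nat.factorial i) * (f i - μf)
          = -(Real.exp (V (m+1)) * ω ^ (m+1) / (Nat.factorial (m+1)) * (f (m+1) - μf)) := by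
        linarith [hsum0]
      rw [hS, Real.exp_neg]
      have hfm : (Nat.factorial m : ℝ) ≠ 0 := by positivity
      have hfm1 : (Nat.factorial (m+1) : ℝ) ≠ 0 := by positivity
      have hcast : (Nat.factorial (m+1) : ℝ) = (m+1) * Nat.factorial m := by
        push_cast [Nat.factorial_succ]; ring
      field_simp
      rw [hcast]
      push_cast; ring
  · -- interior case k < N
    rw [hg k hkN, Real.exp_sub, Real.exp_neg]
    rcases Nat.eq_zero_or_pos k with rfl | hN
    · rw [hg0]
      simp only [zero_add, Finset.sum_range_one]
      field_simp
      ring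
    · obtain ⟨m, rfl⟩ : ∃ m, k = m + 1 := ⟨k - 1, (Nat.succ_pred_eq_of_pos hN).symm⟩
      rw [hg m (lt_trans (Nat.lt_succ_self m) hkN)]
      rw [Real.exp_neg]
      rw [Finset.sum_range_succ (n := m + 1)]
      generalize ∑ i ∈ Finset.range (m + 1), Real.exp (V i) * ω ^ i / (Nat.factorial i) * (f i - μf) = S
      have hfm : (Nat.factorial m : ℝ) ≠ 0 := by positivity
      have hfm1 : (Nat.factorial (m+1) : ℝ) ≠ 0 := by positivity
      have hcast : (Nat.factorial (m+1) : ℝ) = (m+1) * Nat.factorial m := by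
        push_cast [Nat.factorial_succ]; ring
      field_simp
      rw [hcast]
      push_cast; ring
end

section
/- Let g be the solution of the Stein equation for the geometric distribution μ(k) = p(1-p)^k on ℕ₀ (with birth rates b_k = (1-p)(k+1) and unit per capita death rates), for a test function f : ℕ₀ → [0,1]. Then |g(j+1)| ≤ 1/(p(j+1)) for all j ≥ 0, and hence sup_j |g(j)| ≤ 1/p. -/
/-- Bound on the solution of the Stein equation for the geometric distribution
μ(k) = p(1-p)^k: |g(j+1)| ≤ 1/(p(j+1)) for all j ≥ 0, hence ‖g‖ ≤ 1/p. -/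
theorem geometric_stein_solution_bound (p : ℝ) (hp : 0 < p) (hp1 : p < 1)
    (f : ℕ → ℝ) (hf : ∀ k, 0 ≤ f k ∧ f k ≤ 1)
    (μf : ℝ) (hμf : μf = ∑' k : ℕ, f k * (p * (1 - p) ^ k))
    (g : ℕ → ℝ) (hg0 : g 0 = 0)
    (hg : ∀ j : ℕ, g (j + 1) =
      -(1 / ((1 - p) ^ (j + 1) * ((j : ℝ) + 1))) *
        ∑' k : ℕ, (if j + 1 ≤ k then (1 - p) ^ k * (f k - μf) else 0)) :
    (∀ j : ℕ, |g (j + 1)| ≤ 1 / (p * ((j : ℝ) + 1))) ∧ ∀ j : ℕ, |g j| ≤ 1 / p := by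
  have hr0 : (0:ℝ) < 1 - p := by linarith
  have hr1 : (1:ℝ) - p < 1 := by linarith
  have hsum : Summable (fun k : ℕ => (1 - p) ^ k) :=
    summable_geometric_of_lt_one hr0.le hr1
  have htsum : ∑' k : ℕ, (1 - p) ^ k = 1 / p := by
    rw [tsum_geometric_of_lt_one hr0.le hr1]
    ring_nf
  -- 0 ≤ μf ≤ 1
  have hμ0 : 0 ≤ μf := by
    rw [hμf]
    exact tsum_nonneg fun k => mul_nonneg (hf k).1 (by positivity)
  have hsum2 : Summable (fun k : ℕ => p * (1 - p) ^ k) := hsum.mul_left p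
  have hμ1 : μf ≤ 1 := by
    rw [hμf]
    have h1 : ∑' k : ℕ, p * (1 - p) ^ k = 1 := by
      rw [tsum_mul_left, htsum]
      field_simp
    calc ∑' k : ℕ, f k * (p * (1 - p) ^ k) ≤ ∑' k : ℕ, p * (1 - p) ^ k := by
          refine Summable.tsum_le_tsum (fun k => ?_) ?_ hsum2
          · have h := (hf k).2
            have hpos : 0 ≤ p * (1 - p) ^ k := by positivity
            nlinarith
          · refine Summable.of_nonneg_of_le (fun k => mul_nonneg (hf k).1 (by positivity))
              (fun k => ?_) hsum2
            have h := (hf k).2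
            have hpos : 0 ≤ p * (1 - p) ^ k := by positivity
            nlinarith
      _ = 1 := h1
  have habs : ∀ k, |f k - μf| ≤ 1 := by
    intro k
    rw [abs_le]
    constructor <;> [linarith [(hf k).1]; linarith [(hf k).2]]
  have main : ∀ j : ℕ, |g (j + 1)| ≤ 1 / (p * ((j : ℝ) + 1)) := by
    intro j
    have hb : ∀ k : ℕ, |(if j + 1 ≤ k then (1 - p) ^ k * (f k - μf) else 0)|
        ≤ (if j + 1 ≤ k then (1 - p) ^ k else 0) := by
      intro k
      by_cases h : j + 1 ≤ k <;> simp [h, abs_mul, abs_of_nonneg (pow_nonneg hr0.le k)]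
      calc (1 - p) ^ k * |f k - μf| ≤ (1 - p) ^ k * 1 :=
            mul_le_mul_of_nonneg_left (habs k) (pow_nonneg hr0.le k)
        _ = (1 - p) ^ k := mul_one _
    have hsumI : Summable (fun k : ℕ => (if j + 1 ≤ k then (1 - p) ^ k else 0)) := by
      refine Summable.of_nonneg_of_le (fun k => ?_) (fun k => ?_) hsum
      · by_cases h : j + 1 ≤ k <;> simp [h, pow_nonneg hr0.le k]
      · by_cases h : j + 1 ≤ k <;> simp [h, pow_nonneg hr0.le k]
    have hsumAbs : Summable (fun k : ℕ => |(if j + 1 ≤ k then (1 - p) ^ k * (f k - μf) else 0)|) :=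
      Summable.of_nonneg_of_le (fun k => abs_nonneg _) hb hsumI
    have hsumT : Summable (fun k : ℕ => (if j + 1 ≤ k then (1 - p) ^ k * (f k - μf) else 0)) :=
      hsumAbs.of_abs
    have hT : |∑' k : ℕ, (if j + 1 ≤ k then (1 - p) ^ k * (f k - μf) else 0)|
        ≤ ∑' k : ℕ, (if j + 1 ≤ k then (1 - p) ^ k else 0) := by
      calc |∑' k : ℕ, (if j + 1 ≤ k then (1 - p) ^ k * (f k - μf) else 0)|
          ≤ ∑' k : ℕ, |(if j + 1 ≤ k then (1 - p) ^ k * (f k - μf) else 0)| := by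
            rw [abs_le]
            constructor
            · rw [← tsum_neg]
              exact Summable.tsum_le_tsum (fun k => neg_abs_le _) hsumAbs.neg hsumT
            · exact Summable.tsum_le_tsum (fun k => le_abs_self _) hsumT hsumAbs
        _ ≤ ∑' k : ℕ, (if j + 1 ≤ k then (1 - p) ^ k else 0) :=
            Summable.tsum_le_tsum hb hsumAbs hsumI
    have htail : ∑' k : ℕ, (if j + 1 ≤ k then (1 - p) ^ k else 0)
        = (1 - p) ^ (j + 1) * (1 / p) := by
      have hinj : Function.Injective (fun m : ℕ => m + (j + 1)) := fun a b h => by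
        simpa using h
      have hsupp : Function.support (fun k : ℕ => (if j + 1 ≤ k then (1 - p) ^ k else 0))
          ⊆ Set.range (fun m : ℕ => m + (j + 1)) := by
        intro k hk
        by_cases h : j + 1 ≤ k
        · exact ⟨k - (j + 1), by simp [Nat.sub_add_cancel h]⟩
        · simp [Function.mem_support, h] at hk
          exact absurd hk.1 (by omega)
      rw [← hinj.tsum_eq hsupp]
      simp only [le_add_iff_nonneg_left, Nat.zero_le, if_pos, pow_add]
      rw [tsum_mul_right, htsum]
      ring
    have hg' := hg j
    have hj1 : (0:ℝ) < (j : ℝ) + 1 := by positivity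
    have hpw : (0:ℝ) < (1 - p) ^ (j + 1) := pow_pos hr0 _
    rw [hg', abs_mul, abs_neg, abs_of_nonneg (by positivity :
      (0:ℝ) ≤ 1 / ((1 - p) ^ (j + 1) * ((j : ℝ) + 1)))]
    calc 1 / ((1 - p) ^ (j + 1) * ((j : ℝ) + 1)) *
          |∑' k : ℕ, (if j + 1 ≤ k then (1 - p) ^ k * (f k - μf) else 0)|
        ≤ 1 / ((1 - p) ^ (j + 1) * ((j : ℝ) + 1)) * ((1 - p) ^ (j + 1) * (1 / p)) := by
          refine mul_le_mul_of_nonneg_left ?_ (by positivity)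
          rw [← htail]; exact hT
      _ = 1 / (p * ((j : ℝ) + 1)) := by
          field_simp
  refine ⟨main, fun j => ?_⟩
  cases j with
  | zero => simp [hg0]; positivity
  | succ m =>
      have h := main m
      have : 1 / (p * ((m : ℝ) + 1)) ≤ 1 / p := by
        apply one_div_le_one_div_of_le hp
        nlinarith [Nat.cast_nonneg (α := ℝ) m]
      exact h.trans this
end

section
/- For the Poisson distribution Po(λ) and any k ≥ 1, (1/k) Σ_{l=0}^{k-1} e^{-λ} λ^l/l! + (1/λ) Σ_{l=k+1}^{∞} e^{-λ} λ^l/l! ≤ (1/λ)(1 - e^{-λ}). -/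
lemma real_exp_tsum (x : ℝ) : Real.exp x = ∑' n : ℕ, x ^ n / n.factorial := by
  rw [Real.exp_eq_exp_ℝ, NormedSpace.exp_eq_tsum_div]

/-- Poisson nonuniform increment bound: for k ≥ 1,
(1/k) Σ_{l<k} e^{-λ} λ^l/l! + (1/λ) Σ_{l≥k+1} e^{-λ} λ^l/l! ≤ (1/λ)(1-e^{-λ}). -/
theorem poisson_increment_bound (lam : ℝ) (hlam : 0 < lam) (k : ℕ) (hk : 1 ≤ k) :
    1 / (k : ℝ) * ∑ l ∈ Finset.range k, Real.exp (-lam) * lam ^ l / (Nat.factorial l)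
      + 1 / lam *
        ∑' l : ℕ, (if k + 1 ≤ l then Real.exp (-lam) * lam ^ l / (Nat.factorial l) else 0)
      ≤ 1 / lam * (1 - Real.exp (-lam)) := by
  set p : ℕ → ℝ := fun l => Real.exp (-lam) * lam ^ l / (Nat.factorial l) with hp
  have hppos : ∀ l, 0 ≤ p l := fun l => by
    positivity
  have hsummable : Summable p := by
    have := (Real.summable_pow_div_factorial lam).mul_left (Real.exp (-lam))
    simpa [hp, mul_div_assoc] using this
  have htot : ∑' l, p l = 1 := by
    have : ∑' l : ℕ, p l = Real.exp (-lam) * ∑' l : ℕ, lam ^ l / l.factorial := by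
      rw [← tsum_mul_left]; simp [hp, mul_div_assoc]
    rw [this, ← real_exp_tsum, ← Real.exp_add]
    simp
  -- rewrite the conditional tsum
  have hsum1 : Summable (fun l : ℕ => if k + 1 ≤ l then p l else 0) :=
    hsummable.of_nonneg_of_le (fun l => by positivity)
      (fun l => by split <;> simp [hppos])
  have hsum2 : Summable (fun l : ℕ => if l < k + 1 then p l else 0) :=
    hsummable.of_nonneg_of_le (fun l => by positivity)
      (fun l => by split <;> simp [hppos])
  have hsplit : (∑' l : ℕ, (if k + 1 ≤ l then p l else 0))
      = 1 - ∑ l ∈ Finset.range (k + 1), p l := by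
    have h1 : (fun l : ℕ => p l)
        = fun l => (if k + 1 ≤ l then p l else 0) + (if l < k + 1 then p l else 0) := by
      funext l
      by_cases h : k + 1 ≤ l
      · simp [h, Nat.not_lt.mpr h]
      · simp [h, Nat.lt_of_not_le h]
    have h2 : (∑' l : ℕ, (if l < k + 1 then p l else 0))
        = ∑ l ∈ Finset.range (k + 1), p l := by
      rw [tsum_eq_sum (s := Finset.range (k + 1))]
      · exact Finset.sum_congr rfl fun l hl => by simp [Finset.mem_range.mp hl]
      · intro l hl
        simp only [Finset.mem_range, not_lt] at hl
        have : ¬ l < k + 1 := by omega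
        simp [this]
    have := htot
    rw [h1, Summable.tsum_add hsum1 hsum2, h2] at this
    linarith
  rw [hsplit]
  -- key inequality: (1/k) * ∑_{l<k} p l ≤ (1/lam) * ∑_{l=1}^{k} p l
  have hkey : 1 / (k : ℝ) * ∑ l ∈ Finset.range k, p l
      ≤ 1 / lam * (∑ l ∈ Finset.range (k + 1), p l - p 0) := by
    have hshift : ∑ l ∈ Finset.range (k + 1), p l - p 0
        = ∑ l ∈ Finset.range k, p (l + 1) := by
      rw [Finset.sum_range_succ']
      ring
    rw [hshift, Finset.mul_sum, Finset.mul_sum]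
    apply Finset.sum_le_sum
    intro l hl
    have hlk : l + 1 ≤ k := Finset.mem_range.mp hl
    have hfac : ((l + 1).factorial : ℝ) = (l + 1) * l.factorial := by
      push_cast [Nat.factorial_succ]; ring
    have hpl : 1 / lam * p (l + 1) = p l / (l + 1) := by
      simp only [hp, pow_succ, hfac]
      field_simp
    rw [hpl]
    have h1 : 1 / (k : ℝ) * p l ≤ 1 / ((l : ℝ) + 1) * p l := by
      apply mul_le_mul_of_nonneg_right _ (hppos l)
      apply one_div_le_one_div_of_le (by positivity)
      exact_mod_cast hlk
    have h2 : p l / ((l : ℝ) + 1) = 1 / ((l : ℝ) + 1) * p l := by ring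
    linarith [h1]
  have hp0 : p 0 = Real.exp (-lam) := by simp [hp]
  have : 1 / lam * (1 - ∑ l ∈ Finset.range (k + 1), p l)
      + 1 / lam * (∑ l ∈ Finset.range (k + 1), p l - p 0)
      = 1 / lam * (1 - Real.exp (-lam)) := by
    rw [hp0]; ring
  linarith [hkey]
end
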